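/- Let G₁ and G₂ be simple graphs and let k₁, k₂ be natural numbers. If G₁ is k₁-Ramsey and G₂ is k₂-Ramsey, then the Naor product G₁ · G₂ is (k₁·k₂)-Ramsey. -/

import Mathlib

/-- The Naor product of two simple graphs: vertices `(u₁,u₂)` and `(v₁,v₂)` are adjacent
iff `u₁` is adjacent to `v₁` in `G₁`, or `u₁ = v₁` and `u₂` is adjacent to `v₂` in `G₂`. -/
def naorProd {V₁ V₂ : Type*} (G₁ : SimpleGraph V₁) (G₂ : SimpleGraph V₂) :
    SimpleGraph (V₁ × V₂) where
  Adj x y := G₁.Adj x.1 y.1 ∨ (x.1 = y.1 ∧ G₂.Adj x.2 y.2)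
  symm := by
    constructor
    rintro ⟨u₁, u₂⟩ ⟨v₁, v₂⟩ (h | ⟨h₁, h₂⟩)
    · exact Or.inl h.symm
    · exact Or.inr ⟨h₁.symm, h₂.symm⟩
  loopless := by
    constructor
    rintro ⟨u₁, u₂⟩ (h | ⟨-, h⟩)
    · exact G₁.irrefl h
    · exact G₂.irrefl h

/-- A simple graph is `k`-Ramsey if it has no clique of size `k` and no
independent set of size `k`. -/
def IsRamsey {V : Type*} (G : SimpleGraph V) (k : ℕ) : Prop :=
  G.CliqueFree k ∧ Gᶜ.CliqueFree k

lemma clique_card_lt {V : Type*} {G : SimpleGraph V} {k : ℕ} {t : Finset V}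
    (hf : G.CliqueFree k) (hc : G.IsClique t) : t.card < k := by
  by_contra h
  push_neg at h
  obtain ⟨u, hu, hcard⟩ := Finset.exists_subset_card_eq (s := t) h
  exact hf u ⟨hc.subset (by exact_mod_cast hu), hcard⟩

lemma naorProd_cliqueFree {V₁ V₂ : Type*} {G₁ : SimpleGraph V₁} {G₂ : SimpleGraph V₂}
    {k₁ k₂ : ℕ} (h₁ : G₁.CliqueFree k₁) (h₂ : G₂.CliqueFree k₂) :
    (naorProd G₁ G₂).CliqueFree (k₁ * k₂) := by
  classical
  rintro s ⟨hclique, hcard⟩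
  -- projection to first coordinate is a clique in G₁
  have ht : G₁.IsClique (s.image Prod.fst) := by
    rintro a ha b hb hab
    simp only [Finset.coe_image, Set.mem_image, Finset.mem_coe] at ha hb
    obtain ⟨x, hx, rfl⟩ := ha
    obtain ⟨y, hy, rfl⟩ := hb
    have hxy : x ≠ y := fun h => hab (by rw [h])
    rcases hclique hx hy hxy with h | ⟨h, -⟩
    · exact h
    · exact absurd h hab
  have ht1 : (s.image Prod.fst).card < k₁ := clique_card_lt h₁ ht
  -- each fiber has fewer than k₂ elements
  have hfib : ∀ a ∈ s.image Prod.fst, (s.filter (fun x => x.1 = a)).card < k₂ := by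
    intro a _
    have hinj : Set.InjOn Prod.snd ((s.filter (fun x => x.1 = a) : Finset (V₁ × V₂)) : Set (V₁ × V₂)) := by
      rintro ⟨x1, x2⟩ hx ⟨y1, y2⟩ hy h
      simp only [Finset.coe_filter, Set.mem_setOf_eq] at hx hy
      simp only at h
      simp [h, hx.2, hy.2]
    have hc2 : G₂.IsClique ((s.filter (fun x => x.1 = a)).image Prod.snd) := by
      rintro b hb c hc hbc
      simp only [Finset.coe_image, Set.mem_image, Finset.mem_coe,
        Finset.mem_filter] at hb hc
      obtain ⟨x, ⟨hx, hxa⟩, rfl⟩ := hb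
      obtain ⟨y, ⟨hy, hya⟩, rfl⟩ := hc
      have hxy : x ≠ y := fun h => hbc (by rw [h])
      rcases hclique hx hy hxy with h | ⟨-, h⟩
      · exact absurd h (by rw [hxa, hya]; exact G₁.irrefl)
      · exact h
    have := clique_card_lt h₂ hc2
    rwa [Finset.card_image_of_injOn hinj] at this
  have hsum : s.card = ∑ a ∈ s.image Prod.fst, (s.filter (fun x => x.1 = a)).card :=
    Finset.card_eq_sum_card_image Prod.fst s
  have hk2 : 0 < k₂ := by
    rcases Nat.eq_zero_or_pos k₂ with h | h
    · exact absurd (h₂ ∅) (by simp [h, SimpleGraph.isNClique_empty])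
    · exact h
  have : s.card ≤ (s.image Prod.fst).card * (k₂ - 1) := by
    rw [hsum]
    calc ∑ a ∈ s.image Prod.fst, (s.filter (fun x => x.1 = a)).card
        ≤ ∑ _a ∈ s.image Prod.fst, (k₂ - 1) :=
          Finset.sum_le_sum fun a ha => Nat.le_sub_one_of_lt (hfib a ha)
      _ = (s.image Prod.fst).card * (k₂ - 1) := by
          rw [Finset.sum_const, smul_eq_mul]
  have hlt : s.card < k₁ * k₂ := by
    calc s.card ≤ (s.image Prod.fst).card * (k₂ - 1) := this
      _ ≤ (k₁ - 1) * (k₂ - 1) :=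
          Nat.mul_le_mul_right _ (Nat.le_sub_one_of_lt ht1)
      _ < k₁ * k₂ := by
          have hk1 : 0 < k₁ := lt_of_le_of_lt (Nat.zero_le _) ht1
          obtain ⟨a, rfl⟩ := Nat.exists_eq_add_of_lt hk1
          obtain ⟨b, rfl⟩ := Nat.exists_eq_add_of_lt hk2
          simp only [Nat.add_sub_cancel]
          nlinarith
  omega

lemma naorProd_compl {V₁ V₂ : Type*} (G₁ : SimpleGraph V₁) (G₂ : SimpleGraph V₂) :
    (naorProd G₁ G₂)ᶜ = naorProd G₁ᶜ G₂ᶜ := by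
  ext ⟨x1, x2⟩ ⟨y1, y2⟩
  simp only [SimpleGraph.compl_adj, naorProd, ne_eq, Prod.mk.injEq, not_and, not_or]
  by_cases h : x1 = y1
  · subst h
    constructor
    · rintro ⟨hne, -, hnadj⟩
      exact Or.inr ⟨rfl, by simpa using hne, fun h' => hnadj rfl h'⟩
    · rintro (⟨hne, -⟩ | ⟨-, hne, hnadj⟩)
      · exact absurd rfl hne
      · exact ⟨fun _ => hne, fun h => G₁.irrefl h, fun _ => hnadj⟩
  · constructor
    · rintro ⟨-, hnadj, -⟩
      exact Or.inl ⟨h, hnadj⟩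
    · rintro (⟨-, hnadj⟩ | ⟨h', -⟩)
      · exact ⟨fun hh => absurd hh h, hnadj, fun hh => absurd hh h⟩
      · exact absurd h' h

/-- If `G₁` is `k₁`-Ramsey and `G₂` is `k₂`-Ramsey, then their Naor product is
`k₁·k₂`-Ramsey. -/
theorem naorProd_isRamsey {V₁ V₂ : Type*} (G₁ : SimpleGraph V₁) (G₂ : SimpleGraph V₂)
    (k₁ k₂ : ℕ) (h₁ : IsRamsey G₁ k₁) (h₂ : IsRamsey G₂ k₂) :
    IsRamsey (naorProd G₁ G₂) (k₁ * k₂) := by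
  refine ⟨naorProd_cliqueFree h₁.1 h₂.1, ?_⟩
  rw [naorProd_compl]
  exact naorProd_cliqueFree h₁.2 h₂.2
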